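/- Let V, W, U : C(M) → C(M) with V bijective and V(fg) = W(f)·U(g) for all f, g. Setting c = W(1) and d = U(1), the functions c and d never vanish, and the map Tf = Vf/(c·d) is a multiplicative bijection: T(fg) = Tf·Tg. -/

import Mathlib

theorem stmt_14 (n : ℕ) (M : Type*) [TopologicalSpace M]
    [ChartedSpace (EuclideanSpace ℝ (Fin n)) M]
    (V W U : C(M, ℝ) → C(M, ℝ)) (hV : Function.Bijective V)
    (hmul : ∀ f g : C(M, ℝ), V (f * g) = W f * U g) :
    (∀ x : M, W 1 x ≠ 0 ∧ U 1 x ≠ 0) ∧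
    ∃ T : C(M, ℝ) → C(M, ℝ), Function.Bijective T ∧
      (∀ (f : C(M, ℝ)) (x : M), T f x = V f x / (W 1 x * U 1 x)) ∧
      (∀ f g : C(M, ℝ), T (f * g) = T f * T g) := by
  obtain ⟨g1, hg1⟩ := hV.surjective 1
  have hW : ∀ x : M, W 1 x ≠ 0 := by
    intro x hx
    have h := hmul 1 g1
    rw [one_mul, hg1] at h
    have h' := DFunLike.congr_fun h x
    simp [hx] at h'
  have hU : ∀ x : M, U 1 x ≠ 0 := by
    intro x hx
    have h := hmul g1 1
    rw [mul_one, hg1] at h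
    have h' := DFunLike.congr_fun h x
    simp [hx] at h'
  have hV1 : ∀ x : M, V 1 x = W 1 x * U 1 x := by
    intro x
    have h := hmul 1 1
    rw [one_mul] at h
    simpa using DFunLike.congr_fun h x
  have hc : ∀ x : M, V 1 x ≠ 0 := by
    intro x
    rw [hV1 x]
    exact mul_ne_zero (hW x) (hU x)
  have hkey : ∀ f g : C(M, ℝ), V (f * g) * V 1 = V f * V g := by
    intro f g
    have h1 := hmul f g
    have h2 := hmul f 1; rw [mul_one] at h2
    have h3 := hmul 1 g; rw [one_mul] at h3
    have h4 := hmul 1 1; rw [one_mul] at h4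
    rw [h1, h2, h3, h4]; ring
  set cinv : C(M, ℝ) := ⟨fun x => (V 1 x)⁻¹, (V 1).continuous.inv₀ hc⟩ with hcinv
  have hmulc : Function.Bijective (fun h : C(M, ℝ) => h * cinv) := by
    rw [Function.bijective_iff_has_inverse]
    refine ⟨fun h => h * V 1, ?_, ?_⟩
    · intro h
      ext x
      simp only [ContinuousMap.mul_apply, hcinv, ContinuousMap.coe_mk]
      field_simp [hc x]
    · intro h
      ext x
      simp only [ContinuousMap.mul_apply, hcinv, ContinuousMap.coe_mk]
      field_simp [hc x]
  refine ⟨fun x => ⟨hW x, hU x⟩, fun f => V f * cinv, hmulc.comp hV, ?_, ?_⟩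
  · intro f x
    simp [hcinv, hV1 x, div_eq_mul_inv]
  · intro f g
    ext x
    have hk := DFunLike.congr_fun (hkey f g) x
    simp only [ContinuousMap.mul_apply] at hk ⊢
    simp only [hcinv, ContinuousMap.coe_mk]
    field_simp [hc x]
    linear_combination hk
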